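/- Let φ, ψ be propositional formulas and suppose there exists a substitution e with h^e(φ) ∈ T_D. Then φ → ψ ∈ Cn_0(R_{0*}, T_D) if and only if for every substitution e: h^e(φ) ∈ T_D implies both h^e(ψ) ∈ T_D and P_0(h^e(φ)) ⊆ P_0(h^e(ψ)). -/

import Mathlib

/-- Propositional formulas built from propositional variables (indexed by `ℕ`)
using →, ∼, ∨, ∧, ≡. -/
inductive PropForm : Type
  | var : ℕ → PropForm
  | neg : PropForm → PropForm
  | imp : PropForm → PropForm → PropForm
  | disj : PropForm → PropForm → PropForm
  | conj : PropForm → PropForm → PropForm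
  | equiv : PropForm → PropForm → PropForm

/-- The implication table of the matrix 𝔐_D. -/
def fimp : Fin 3 → Fin 3 → Fin 3 := ![![1, 1, 1], ![0, 1, 0], ![0, 1, 2]]
/-- The negation table of the matrix 𝔐_D. -/
def fneg : Fin 3 → Fin 3 := ![1, 0, 2]
/-- The disjunction table of the matrix 𝔐_D. -/
def fdisj : Fin 3 → Fin 3 → Fin 3 := ![![0, 1, 0], ![1, 1, 1], ![0, 1, 2]]
/-- The conjunction table of the matrix 𝔐_D. -/
def fconj : Fin 3 → Fin 3 → Fin 3 := ![![0, 0, 0], ![0, 1, 1], ![0, 1, 2]]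
/-- The equivalence table of the matrix 𝔐_D. -/
def fequiv : Fin 3 → Fin 3 → Fin 3 := ![![1, 0, 0], ![0, 1, 0], ![0, 0, 2]]

/-- Value of a propositional formula in the matrix 𝔐_D under a valuation `v`. -/
def evalD (v : ℕ → Fin 3) : PropForm → Fin 3
  | .var n => v n
  | .neg φ => fneg (evalD v φ)
  | .imp φ ψ => fimp (evalD v φ) (evalD v ψ)
  | .disj φ ψ => fdisj (evalD v φ) (evalD v ψ)
  | .conj φ ψ => fconj (evalD v φ) (evalD v ψ)
  | .equiv φ ψ => fequiv (evalD v φ) (evalD v ψ)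

/-- T_D : the set of propositional formulas valid in 𝔐_D
(every valuation gives a designated value, i.e. 1 or 2). -/
def TD : Set PropForm := {φ | ∀ v : ℕ → Fin 3, evalD v φ = 1 ∨ evalD v φ = 2}
/-- P_0(φ) : the set of propositional variables occurring in `φ`. -/
def PropForm.vars : PropForm → Set ℕ
  | .var n => {n}
  | .neg φ => φ.vars
  | .imp φ ψ => φ.vars ∪ ψ.vars
  | .disj φ ψ => φ.vars ∪ ψ.vars
  | .conj φ ψ => φ.vars ∪ ψ.vars
  | .equiv φ ψ => φ.vars ∪ ψ.vars
/-- h^e : the endomorphism of the set of propositional formulas induced by a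
substitution `e` of formulas for propositional variables. -/
def substP (e : ℕ → PropForm) : PropForm → PropForm
  | .var n => e n
  | .neg φ => .neg (substP e φ)
  | .imp φ ψ => .imp (substP e φ) (substP e ψ)
  | .disj φ ψ => .disj (substP e φ) (substP e ψ)
  | .conj φ ψ => .conj (substP e φ) (substP e ψ)
  | .equiv φ ψ => .equiv (substP e φ) (substP e ψ)
/-- Cn_0(R_{0*}, X) : the smallest set of propositional formulas containing `X` and
closed under modus ponens (r_0^0) and simultaneous substitution for
propositional variables (r_*^0). -/
inductive Cn0star (X : Set PropForm) : PropForm → Prop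
  | base {φ : PropForm} : φ ∈ X → Cn0star X φ
  | mp {φ ψ : PropForm} : Cn0star X (.imp φ ψ) → Cn0star X φ → Cn0star X ψ
  | subst {φ : PropForm} (e : ℕ → PropForm) : Cn0star X φ → Cn0star X (substP e φ)


namespace CnProof
open PropForm

/-! ### basic simp lemmas -/

@[simp] lemma vars_var (n : ℕ) : (PropForm.var n).vars = {n} := rfl
@[simp] lemma vars_neg (a : PropForm) : (PropForm.neg a).vars = a.vars := rfl
@[simp] lemma vars_imp (a b : PropForm) : (PropForm.imp a b).vars = a.vars ∪ b.vars := rfl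
@[simp] lemma vars_disj (a b : PropForm) : (PropForm.disj a b).vars = a.vars ∪ b.vars := rfl
@[simp] lemma vars_conj (a b : PropForm) : (PropForm.conj a b).vars = a.vars ∪ b.vars := rfl
@[simp] lemma vars_equiv (a b : PropForm) : (PropForm.equiv a b).vars = a.vars ∪ b.vars := rfl

/-! ### table facts -/

lemma tbl_mp : ∀ a b : Fin 3, (fimp a b = 1 ∨ fimp a b = 2) → (a = 1 ∨ a = 2) →
    (b = 1 ∨ b = 2) := by decide

lemma tri : ∀ a : Fin 3, a = 0 ∨ a = 1 ∨ a = 2 := by decide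

/-! ### eval lemmas -/

lemma evalD_ext {w w' : ℕ → Fin 3} {χ : PropForm} (h : ∀ n ∈ χ.vars, w n = w' n) :
    evalD w χ = evalD w' χ := by
  induction χ with
  | var n => exact h n (by simp)
  | neg a ih => simp only [evalD]; rw [ih (fun n hn => h n (by simp [hn]))]
  | imp a b ih1 ih2 | disj a b ih1 ih2 | conj a b ih1 ih2 | equiv a b ih1 ih2 =>
    simp only [evalD]
    rw [ih1 (fun n hn => h n (by simp [hn])), ih2 (fun n hn => h n (by simp [hn]))]

lemma evalD_substP (e : ℕ → PropForm) (w : ℕ → Fin 3) (χ : PropForm) :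
    evalD w (substP e χ) = evalD (fun n => evalD w (e n)) χ := by
  induction χ with
  | var n => rfl
  | neg a ih => simp only [substP, evalD, ih]
  | imp a b ih1 ih2 | disj a b ih1 ih2 | conj a b ih1 ih2 | equiv a b ih1 ih2 =>
    simp only [substP, evalD, ih1, ih2]

lemma mem_vars_substP {m : ℕ} {e : ℕ → PropForm} {χ : PropForm} :
    m ∈ (substP e χ).vars ↔ ∃ n ∈ χ.vars, m ∈ (e n).vars := by
  induction χ with
  | var n => simp [substP]
  | neg a ih => simpa [substP] using ih
  | imp a b ih1 ih2 | disj a b ih1 ih2 | conj a b ih1 ih2 | equiv a b ih1 ih2 =>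
    simp only [substP, vars_imp, vars_disj, vars_conj, vars_equiv, Set.mem_union, ih1, ih2]
    constructor
    · rintro (⟨n, hn, hm⟩ | ⟨n, hn, hm⟩) <;> exact ⟨n, by simp [hn], hm⟩
    · rintro ⟨n, hn, hm⟩
      rcases (Set.mem_union _ _ _).1 hn with h | h
      · exact Or.inl ⟨n, h, hm⟩
      · exact Or.inr ⟨n, h, hm⟩

lemma vars_nonempty (χ : PropForm) : ∃ n, n ∈ χ.vars := by
  induction χ with
  | var n => exact ⟨n, by simp⟩
  | neg a ih => simpa using ih
  | imp a b ih1 ih2 | disj a b ih1 ih2 | conj a b ih1 ih2 | equiv a b ih1 ih2 =>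
    obtain ⟨n, hn⟩ := ih1; exact ⟨n, by simp [hn]⟩

lemma evalD_eq_two_of {w : ℕ → Fin 3} {χ : PropForm} (h : ∀ n ∈ χ.vars, w n = 2) :
    evalD w χ = 2 := by
  induction χ with
  | var n => exact h n (by simp)
  | neg a ih =>
    have := ih (fun n hn => h n (by simp [hn]))
    simp only [evalD, this]; decide
  | imp a b ih1 ih2 | disj a b ih1 ih2 | conj a b ih1 ih2 | equiv a b ih1 ih2 =>
    have h1 := ih1 (fun n hn => h n (by simp [hn]))
    have h2 := ih2 (fun n hn => h n (by simp [hn]))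
    simp only [evalD, h1, h2]; decide

lemma fneg_two : ∀ a : Fin 3, fneg a = 2 ↔ a = 2 := by decide
lemma fimp_two : ∀ a b : Fin 3, fimp a b = 2 ↔ a = 2 ∧ b = 2 := by decide
lemma fdisj_two' : ∀ a b : Fin 3, fdisj a b = 2 ↔ a = 2 ∧ b = 2 := by decide
lemma fconj_two : ∀ a b : Fin 3, fconj a b = 2 ↔ a = 2 ∧ b = 2 := by decide
lemma fequiv_two : ∀ a b : Fin 3, fequiv a b = 2 ↔ a = 2 ∧ b = 2 := by decide

lemma evalD_eq_two_imp {w : ℕ → Fin 3} {χ : PropForm} (h : evalD w χ = 2) :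
    ∀ n ∈ χ.vars, w n = 2 := by
  induction χ with
  | var n => intro m hm; simp at hm; subst hm; exact h
  | neg a ih =>
    simp only [evalD] at h
    exact fun n hn => ih ((fneg_two _).1 h) n (by simpa using hn)
  | imp a b ih1 ih2 | disj a b ih1 ih2 | conj a b ih1 ih2 | equiv a b ih1 ih2 =>
    simp only [evalD] at h
    first
      | (have hab := (fimp_two _ _).1 h) | (have hab := (fdisj_two' _ _).1 h)
      | (have hab := (fconj_two _ _).1 h) | (have hab := (fequiv_two _ _).1 h)
    intro n hn
    simp only [vars_imp, vars_disj, vars_conj, vars_equiv, Set.mem_union] at hn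
    rcases hn with hn | hn
    · exact ih1 hab.1 n hn
    · exact ih2 hab.2 n hn

/-! ### variable lists -/

def varList : PropForm → List ℕ
  | .var n => [n]
  | .neg a => varList a
  | .imp a b => varList a ++ varList b
  | .disj a b => varList a ++ varList b
  | .conj a b => varList a ++ varList b
  | .equiv a b => varList a ++ varList b

lemma mem_varList {n : ℕ} {χ : PropForm} : n ∈ varList χ ↔ n ∈ χ.vars := by
  induction χ with
  | var m => simp [varList]
  | neg a ih => simpa [varList] using ih
  | imp a b ih1 ih2 | disj a b ih1 ih2 | conj a b ih1 ih2 | equiv a b ih1 ih2 =>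
    simp [varList, ih1, ih2]

lemma le_foldr_max : ∀ {l : List ℕ} {m : ℕ}, m ∈ l → m ≤ l.foldr max 0 := by
  intro l
  induction l with
  | nil => intro m hm; simp at hm
  | cons a t ih =>
    intro m hm
    rcases List.mem_cons.1 hm with rfl | h
    · exact le_max_left _ _
    · exact le_trans (ih h) (le_max_right _ _)

/-! ### Cn0star ⊆ TD -/

lemma Cn0star_TD_sub {χ : PropForm} (h : Cn0star TD χ) : χ ∈ TD := by
  induction h with
  | base h => exact h
  | mp h1 h2 ih1 ih2 => exact fun w => tbl_mp _ _ (ih1 w) (ih2 w)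
  | subst e h ih => intro w; rw [evalD_substP]; exact ih _

/-! ### the gadget formulas -/

def theta1 (r : ℕ) : PropForm := .imp (.var r) (.var r)

lemma theta1_facts : ∀ a : Fin 3, (fimp a a = 2 ↔ a = 2) ∧ (fimp a a = 1 ∨ fimp a a = 2) := by
  decide

lemma theta1_val (w : ℕ → Fin 3) (r : ℕ) :
    evalD w (theta1 r) = 1 ∨ evalD w (theta1 r) = 2 := (theta1_facts (w r)).2

lemma theta1_two {w : ℕ → Fin 3} {r : ℕ} : evalD w (theta1 r) = 2 ↔ w r = 2 :=
  (theta1_facts (w r)).1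

lemma theta1_vars {m r : ℕ} : m ∈ (theta1 r).vars ↔ m = r := by simp [theta1]

def dChain (y : ℕ) (t : List ℕ) : PropForm :=
  t.foldr (fun m acc => .disj (theta1 m) acc) (theta1 y)

lemma fdisj_two : ∀ a b : Fin 3, fdisj a b = 2 ↔ a = 2 ∧ b = 2 := by decide
lemma fdisj_val : ∀ a b : Fin 3, (a = 1 ∨ a = 2) → (b = 1 ∨ b = 2) →
    (fdisj a b = 1 ∨ fdisj a b = 2) := by decide

lemma dChain_val {w : ℕ → Fin 3} {y : ℕ} : ∀ {t : List ℕ},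
    (evalD w (dChain y t) = 2 ↔ (w y = 2 ∧ ∀ m ∈ t, w m = 2)) ∧
      (evalD w (dChain y t) = 1 ∨ evalD w (dChain y t) = 2) := by
  intro t
  induction t with
  | nil => simpa [dChain, theta1_two (w := w) (r := y)] using theta1_val w y
  | cons a t ih =>
    have hstep : dChain y (a :: t) = .disj (theta1 a) (dChain y t) := rfl
    constructor
    · rw [hstep]
      have hrfl : evalD w (PropForm.disj (theta1 a) (dChain y t)) =
          fdisj (evalD w (theta1 a)) (evalD w (dChain y t)) := rfl
      rw [hrfl, fdisj_two, theta1_two, ih.1]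
      simp only [List.mem_cons]
      constructor
      · rintro ⟨ha, hy, ht⟩
        exact ⟨hy, fun m hm => by rcases hm with rfl | hm; exact ha; exact ht m hm⟩
      · rintro ⟨hy, h⟩
        exact ⟨h a (Or.inl rfl), hy, fun m hm => h m (Or.inr hm)⟩
    · rw [hstep]
      exact fdisj_val _ _ (theta1_val w a) ih.2

lemma dChain_vars {y : ℕ} : ∀ {t : List ℕ} {m : ℕ},
    m ∈ (dChain y t).vars ↔ m = y ∨ m ∈ t := by
  intro t
  induction t with
  | nil => simp [dChain, theta1]
  | cons a t ih =>
    intro m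
    have hstep : dChain y (a :: t) = .disj (theta1 a) (dChain y t) := rfl
    rw [hstep]
    simp only [vars_disj, Set.mem_union, theta1_vars, ih, List.mem_cons]
    tauto

def mkZ : List ℕ → ℕ → PropForm
  | [], r => theta1 r
  | y :: t, _ => dChain y t

lemma mkZ_val (l : List ℕ) (r : ℕ) (w : ℕ → Fin 3) :
    evalD w (mkZ l r) = 1 ∨ evalD w (mkZ l r) = 2 := by
  cases l with
  | nil => exact theta1_val w r
  | cons y t => exact dChain_val.2

lemma mkZ_two_of {l : List ℕ} {r : ℕ} {w : ℕ → Fin 3} (hl : l ≠ [])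
    (h : ∀ m ∈ l, w m = 2) : evalD w (mkZ l r) = 2 := by
  cases l with
  | nil => exact absurd rfl hl
  | cons y t =>
    exact dChain_val.1.2 ⟨h y (List.mem_cons_self), fun m hm => h m (List.mem_cons_of_mem _ hm)⟩

lemma mkZ_one_nil {r : ℕ} {w : ℕ → Fin 3} (h : w r ≠ 2) : evalD w (mkZ [] r) = 1 := by
  rcases theta1_val w r with h1 | h2
  · exact h1
  · exact absurd (theta1_two.1 h2) h

lemma mkZ_vars {l : List ℕ} {r m : ℕ} (h : m ∈ (mkZ l r).vars) : m ∈ l ∨ m = r := by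
  cases l with
  | nil => exact Or.inr (theta1_vars.1 h)
  | cons y t =>
    rcases dChain_vars.1 h with rfl | hm
    · exact Or.inl (List.mem_cons_self)
    · exact Or.inl (List.mem_cons_of_mem _ hm)

/-! ### the per-variable gadget -/

def gadget (v c : ℕ → Fin 3) (Z : PropForm) (r n : ℕ) : PropForm :=
  if v n = 2 then (if c n = 1 then Z else .neg Z)
  else
    let core : PropForm := if v n = c n then .disj Z (theta1 r) else .conj (.neg Z) (theta1 r)
    if v n = 0 then .neg core else core

def Gfun (a b z t : Fin 3) : Fin 3 :=
  if a = 2 then (if b = 1 then z else fneg z)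
  else
    let core := if a = b then fdisj z t else fconj (fneg z) t
    if a = 0 then fneg core else core

lemma eval_gadget (v c : ℕ → Fin 3) (Z : PropForm) (r n : ℕ) (w : ℕ → Fin 3) :
    evalD w (gadget v c Z r n) = Gfun (v n) (c n) (evalD w Z) (evalD w (theta1 r)) := by
  unfold gadget Gfun
  split_ifs <;> simp [evalD]

lemma Gfun_c : ∀ a b z t : Fin 3, (b = 0 ∨ b = 1) → z = 1 → Gfun a b z t = b := by decide
lemma Gfun_v : ∀ a b z t : Fin 3, z = 2 → t = 1 → Gfun a b z t = a := by decide
lemma Gfun_two : ∀ a b z t : Fin 3, z = 2 → t = 2 → Gfun a b z t = 2 := by decide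

lemma gadget_vars_two {v c : ℕ → Fin 3} {Z : PropForm} {r n m : ℕ} (h : v n = 2)
    (hm : m ∈ (gadget v c Z r n).vars) : m ∈ Z.vars := by
  unfold gadget at hm
  rw [if_pos h] at hm
  split_ifs at hm <;> simpa using hm

lemma gadget_r_mem {v c : ℕ → Fin 3} {Z : PropForm} {r n : ℕ} (h : v n ≠ 2) :
    r ∈ (gadget v c Z r n).vars := by
  unfold gadget
  rw [if_neg h]
  split_ifs <;> simp [theta1]

/-! ### extracting a classical valuation from hex -/

lemma exists_classical {φ : PropForm} (hex : ∃ e : ℕ → PropForm, substP e φ ∈ TD) :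
    ∃ c : ℕ → Fin 3, (∀ n, c n = 0 ∨ c n = 1) ∧ evalD c φ = 1 := by
  obtain ⟨e₀, h₀⟩ := hex
  set w₀ : ℕ → Fin 3 := fun _ => 0 with hw₀
  refine ⟨fun n => evalD w₀ (e₀ n), ?_, ?_⟩
  · intro n
    rcases tri (evalD w₀ (e₀ n)) with h | h | h
    · exact Or.inl h
    · exact Or.inr h
    · exfalso
      obtain ⟨m, hm⟩ := vars_nonempty (e₀ n)
      have := evalD_eq_two_imp h m hm
      simp [hw₀] at this
  · have h1 := h₀ w₀
    rw [evalD_substP] at h1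
    rcases h1 with h1 | h1
    · exact h1
    · exfalso
      obtain ⟨m, hm⟩ := vars_nonempty φ
      have h2 : evalD w₀ (e₀ m) = 2 := evalD_eq_two_imp h1 m hm
      obtain ⟨k, hk⟩ := vars_nonempty (e₀ m)
      have := evalD_eq_two_imp h2 k hk
      simp [hw₀] at this

end CnProof

namespace CnProof

lemma mkZ_vars_ne {l : List ℕ} {r m : ℕ} (hl : l ≠ []) (h : m ∈ (mkZ l r).vars) : m ∈ l := by
  cases l with
  | nil => exact absurd rfl hl
  | cons y t =>
    rcases dChain_vars.1 h with rfl | hm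
    · exact List.mem_cons_self
    · exact List.mem_cons_of_mem _ hm

lemma key (φ ψ : PropForm) (c : ℕ → Fin 3)
    (hc01 : ∀ n, c n = 0 ∨ c n = 1) (hcφ : evalD c φ = 1)
    (hRHS : ∀ e : ℕ → PropForm, substP e φ ∈ TD →
        substP e ψ ∈ TD ∧ (substP e φ).vars ⊆ (substP e ψ).vars)
    (v : ℕ → Fin 3)
    (hcompat : (∀ m ∈ varList φ ++ varList ψ, v m ≠ 2) →
        ∀ m ∈ varList φ ++ varList ψ, c m = v m)
    (ha : evalD v φ = 1 ∨ evalD v φ = 2) :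
    (evalD v ψ = 1 ∨ evalD v ψ = 2) ∧ (evalD v φ = 1 → evalD v ψ ≠ 2) := by
  set L : List ℕ := varList φ ++ varList ψ with hL
  set r : ℕ := L.foldr max 0 + 1 with hr
  have hrL : ∀ m ∈ L, m ≠ r := by
    intro m hm heq
    have h1 := le_foldr_max hm
    omega
  set YL : List ℕ := L.filter (fun m => decide (v m = 2)) with hYL
  have hYLmem : ∀ m, m ∈ YL ↔ m ∈ L ∧ v m = 2 := by
    intro m
    rw [hYL]
    simp [List.mem_filter]
  set Z : PropForm := mkZ YL r with hZ
  set E : ℕ → PropForm := gadget v c Z r with hE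
  have hEeval : ∀ (w : ℕ → Fin 3) (n : ℕ),
      evalD w (E n) = Gfun (v n) (c n) (evalD w Z) (evalD w (theta1 r)) := by
    intro w n
    rw [hE]
    exact eval_gadget v c Z r n w
  -- validity of the substituted φ
  have hvalid : substP E φ ∈ TD := by
    intro w
    rw [evalD_substP]
    rcases mkZ_val YL r w with hz | hz
    · have hu : ∀ n ∈ PropForm.vars φ, evalD w (E n) = c n := by
        intro n _
        rw [hEeval w n, Gfun_c _ _ _ _ (hc01 n) (by rw [hZ]; exact hz)]
      have heq := evalD_ext (w := fun n => evalD w (E n)) (w' := c) (χ := φ) hu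
      rw [heq, hcφ]
      exact Or.inl rfl
    · rcases theta1_val w r with ht | ht
      · have hu : ∀ n ∈ PropForm.vars φ, evalD w (E n) = v n := by
          intro n _
          rw [hEeval w n, Gfun_v _ _ _ _ (by rw [hZ]; exact hz) ht]
        have heq := evalD_ext (w := fun n => evalD w (E n)) (w' := v) (χ := φ) hu
        rw [heq]
        exact ha
      · refine Or.inr (evalD_eq_two_of ?_)
        intro n _
        rw [hEeval w n, Gfun_two _ _ _ _ (by rw [hZ]; exact hz) ht]
  obtain ⟨hψTD, hsub⟩ := hRHS E hvalid
  -- the special valuation reaching v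
  set w' : ℕ → Fin 3 := fun m => if m = r then 0 else v m with hw'
  have hwr : w' r = 0 := by rw [hw']; simp
  have hustar : ∀ n ∈ L, evalD w' (E n) = v n := by
    cases hYcase : YL with
    | nil =>
      have hall : ∀ m ∈ L, v m ≠ 2 := by
        intro m hm hv2
        have hmem : m ∈ YL := (hYLmem m).2 ⟨hm, hv2⟩
        rw [hYcase] at hmem
        simp at hmem
      have hz : evalD w' Z = 1 := by
        rw [hZ, hYcase]
        exact mkZ_one_nil (by rw [hwr]; decide)
      intro n hn
      rw [hEeval w' n, Gfun_c _ _ _ _ (hc01 n) hz]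
      exact hcompat hall n hn
    | cons y t =>
      have hz : evalD w' Z = 2 := by
        rw [hZ]
        refine mkZ_two_of (by rw [hYcase]; simp) ?_
        intro m hm
        obtain ⟨hmL, hv2⟩ := (hYLmem m).1 hm
        rw [hw']
        simp [hrL m hmL, hv2]
      have ht : evalD w' (theta1 r) = 1 := by
        rcases theta1_val w' r with h | h
        · exact h
        · exact absurd (theta1_two.1 h) (by rw [hwr]; decide)
      intro n hn
      rw [hEeval w' n, Gfun_v _ _ _ _ hz ht]
  constructor
  · have hb := hψTD w'
    rw [evalD_substP] at hb
    have heq := evalD_ext (w := fun n => evalD w' (E n)) (w' := v) (χ := ψ)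
      (fun n hn => hustar n (by rw [hL]; exact List.mem_append.2 (Or.inr (mem_varList.2 hn))))
    rwa [heq] at hb
  · intro ha1 hb2
    have hallψ : ∀ n ∈ PropForm.vars ψ, v n = 2 := evalD_eq_two_imp hb2
    obtain ⟨n₀, hn₀⟩ := vars_nonempty ψ
    have hn₀L : n₀ ∈ L := by rw [hL]; exact List.mem_append.2 (Or.inr (mem_varList.2 hn₀))
    have hYne : YL ≠ [] := by
      intro h
      have hmem : n₀ ∈ YL := (hYLmem n₀).2 ⟨hn₀L, hallψ n₀ hn₀⟩
      rw [h] at hmem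
      simp at hmem
    obtain ⟨p₀, hp₀, hp₀2⟩ : ∃ p ∈ PropForm.vars φ, v p ≠ 2 := by
      by_contra hcon
      push_neg at hcon
      have h2 : evalD v φ = 2 := evalD_eq_two_of hcon
      rw [ha1] at h2
      exact absurd h2 (by decide)
    have hrφ : r ∈ (substP E φ).vars :=
      mem_vars_substP.2 ⟨p₀, hp₀, by rw [hE]; exact gadget_r_mem hp₀2⟩
    obtain ⟨n, hnψ, hrn⟩ := mem_vars_substP.1 (hsub hrφ)
    have hv2 : v n = 2 := hallψ n hnψ
    have hrZ : r ∈ Z.vars := gadget_vars_two hv2 (by rw [hE] at hrn; exact hrn)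
    have hrY : r ∈ YL := mkZ_vars_ne hYne (by rw [hZ] at hrZ; exact hrZ)
    exact hrL r ((hYLmem r).1 hrY).1 rfl

lemma choose_c (φ ψ : PropForm) (hex : ∃ e : ℕ → PropForm, substP e φ ∈ TD)
    (v : ℕ → Fin 3) (ha : evalD v φ = 1 ∨ evalD v φ = 2) :
    ∃ c : ℕ → Fin 3, (∀ n, c n = 0 ∨ c n = 1) ∧ evalD c φ = 1 ∧
      ((∀ m ∈ varList φ ++ varList ψ, v m ≠ 2) →
        ∀ m ∈ varList φ ++ varList ψ, c m = v m) := by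
  by_cases h2 : ∀ m ∈ varList φ ++ varList ψ, v m ≠ 2
  · refine ⟨fun m => if v m = 2 then 0 else v m, fun n => ?_, ?_, fun _ m hm => ?_⟩
    · by_cases hv : v n = 2
      · simp [hv]
      · rcases tri (v n) with h | h | h
        · simp [hv, h]
        · simp [hv, h]
        · exact absurd h hv
    · have heq : evalD (fun m => if v m = 2 then 0 else v m) φ = evalD v φ := by
        apply evalD_ext
        intro n hn
        have hvn : v n ≠ 2 := h2 n (List.mem_append.2 (Or.inl (mem_varList.2 hn)))
        simp [hvn]
      rw [heq]
      rcases ha with h | h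
      · exact h
      · exfalso
        obtain ⟨m, hm⟩ := vars_nonempty φ
        exact h2 m (List.mem_append.2 (Or.inl (mem_varList.2 hm))) (evalD_eq_two_imp h m hm)
    · have hvm : v m ≠ 2 := h2 m hm
      simp [hvm]
  · obtain ⟨c₀, hc₀01, hc₀φ⟩ := exists_classical hex
    exact ⟨c₀, hc₀01, hc₀φ, fun h => absurd h h2⟩

end CnProof


/-- if some substitution instance of `φ` lies in T_D, then
φ → ψ ∈ Cn_0(R_{0*}, T_D) iff every substitution `e` with h^e(φ) ∈ T_D also has
h^e(ψ) ∈ T_D and P_0(h^e(φ)) ⊆ P_0(h^e(ψ)). -/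
theorem imp_mem_Cn0star_TD_iff (φ ψ : PropForm)
    (hex : ∃ e : ℕ → PropForm, substP e φ ∈ TD) :
    Cn0star TD (.imp φ ψ) ↔
      ∀ e : ℕ → PropForm, substP e φ ∈ TD →
        substP e ψ ∈ TD ∧ (substP e φ).vars ⊆ (substP e ψ).vars := by
  constructor
  · intro h e heφ
    have himp : (PropForm.imp (substP e φ) (substP e ψ)) ∈ TD :=
      CnProof.Cn0star_TD_sub (Cn0star.subst e h)
    constructor
    · intro w
      exact CnProof.tbl_mp _ _ (himp w) (heφ w)
    · intro n hn
      by_contra hnψ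
      set w : ℕ → Fin 3 := fun m => if m = n then 0 else 2 with hw
      have h2ψ : evalD w (substP e ψ) = 2 := by
        apply CnProof.evalD_eq_two_of
        intro m hm
        rw [hw]
        simp only
        rw [if_neg]
        intro h'
        subst h'
        exact hnψ hm
      have h1φ : evalD w (substP e φ) = 1 := by
        rcases heφ w with h1 | h1
        · exact h1
        · exfalso
          have hwn := CnProof.evalD_eq_two_imp h1 n hn
          rw [hw] at hwn
          simp at hwn
      have hd := himp w
      have hrfl : evalD w (PropForm.imp (substP e φ) (substP e ψ)) =
          fimp (evalD w (substP e φ)) (evalD w (substP e ψ)) := rfl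
      rw [hrfl, h1φ, h2ψ] at hd
      revert hd
      decide
  · intro hRHS
    apply Cn0star.base
    intro v
    have hiv : evalD v (PropForm.imp φ ψ) = fimp (evalD v φ) (evalD v ψ) := rfl
    rcases CnProof.tri (evalD v φ) with ha | ha | ha
    · rw [hiv, ha]
      exact (by decide : ∀ b : Fin 3, fimp 0 b = 1 ∨ fimp 0 b = 2) _
    · obtain ⟨c, hc01, hcφ, hcompat⟩ := CnProof.choose_c φ ψ hex v (Or.inl ha)
      obtain ⟨hb, hb2⟩ := CnProof.key φ ψ c hc01 hcφ hRHS v hcompat (Or.inl ha)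
      have hb1 : evalD v ψ = 1 := by
        rcases hb with h | h
        · exact h
        · exact absurd h (hb2 ha)
      rw [hiv, ha, hb1]
      decide
    · obtain ⟨c, hc01, hcφ, hcompat⟩ := CnProof.choose_c φ ψ hex v (Or.inr ha)
      obtain ⟨hb, _⟩ := CnProof.key φ ψ c hc01 hcφ hRHS v hcompat (Or.inr ha)
      rcases hb with h | h <;> rw [hiv, ha, h] <;> decide
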